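/- Let p be an odd prime and Fp = ZMod p. Let T ⊆ GL_4(Fp) be the set of matrices [[1, 0, 0, r₁], [0, 1, 0, r₂], [r₁, 0, 1, r₃], [0, 0, 0, 1]] for r₁, r₂, r₃ ∈ Fp. Then the number of distinct sets of the form { Q_P·M·Q_P⁻¹ : M ∈ T }, as P ranges over GL_3(Fp) and Q_P = [[P,0],[0,1]] ∈ GL_4(Fp), equals (p³ − 1)(p + 1). -/

import Mathlib

open Matrix

/-- The block matrix `Q = [[P, 0], [0, 1]]`. -/
def QofP (p n : ℕ) (P : Matrix (Fin n) (Fin n) (ZMod p)) :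
    Matrix (Fin (n + 1)) (Fin (n + 1)) (ZMod p) :=
  Matrix.reindex finSumFinEquiv finSumFinEquiv
    (Matrix.fromBlocks P 0 0 (1 : Matrix (Fin 1) (Fin 1) (ZMod p)))

variable {p : ℕ}

def colM (w : Fin 3 → ZMod p) : Matrix (Fin 3) (Fin 1) (ZMod p) :=
  Matrix.of fun i _ => w i

def mkM (b c w : Fin 3 → ZMod p) : Matrix (Fin 4) (Fin 4) (ZMod p) :=
  Matrix.reindex finSumFinEquiv finSumFinEquiv
    (Matrix.fromBlocks (1 + (b ⬝ᵥ w) • vecMulVec c b) (colM w) 0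
      (1 : Matrix (Fin 1) (Fin 1) (ZMod p)))

def Sset (b c : Fin 3 → ZMod p) : Set (Matrix (Fin 4) (Fin 4) (ZMod p)) :=
  {N | ∃ w, N = mkM b c w}

lemma QofP_mul (A B : Matrix (Fin 3) (Fin 3) (ZMod p)) :
    QofP p 3 A * QofP p 3 B = QofP p 3 (A * B) := by
  simp only [QofP, Matrix.reindex_apply, Matrix.submatrix_mul_equiv,
    Matrix.fromBlocks_multiply]
  simp

lemma QofP_one : QofP p 3 (1 : Matrix (Fin 3) (Fin 3) (ZMod p)) = 1 := by
  simp [QofP, Matrix.fromBlocks_one]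

lemma mul_colM (P : Matrix (Fin 3) (Fin 3) (ZMod p)) (w : Fin 3 → ZMod p) :
    P * colM w = colM (P *ᵥ w) := by
  ext i j
  simp [colM, Matrix.mul_apply, Matrix.mulVec, dotProduct]

lemma mul_vecMulVec_mul (P P' : Matrix (Fin 3) (Fin 3) (ZMod p)) (c b : Fin 3 → ZMod p) :
    P * vecMulVec c b * P' = vecMulVec (P *ᵥ c) (b ᵥ* P') := by
  ext i j
  simp only [Matrix.mul_apply, vecMulVec_apply, Matrix.mulVec, Matrix.vecMul,
    dotProduct, Finset.sum_mul, Finset.mul_sum]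
  apply Finset.sum_congr rfl; intro l _
  apply Finset.sum_congr rfl; intro k _
  ring

lemma conj_mkM (P P' : Matrix (Fin 3) (Fin 3) (ZMod p))
    (h1 : P * P' = 1) (h2 : P' * P = 1) (b c w : Fin 3 → ZMod p) :
    QofP p 3 P * mkM b c w * QofP p 3 P' = mkM (b ᵥ* P') (P *ᵥ c) (P *ᵥ w) := by
  have hdot : (b ᵥ* P') ⬝ᵥ (P *ᵥ w) = b ⬝ᵥ w := by
    rw [Matrix.dotProduct_mulVec, Matrix.vecMul_vecMul, h2, Matrix.vecMul_one]
  have hTL : P * (1 + (b ⬝ᵥ w) • vecMulVec c b) * P'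
      = 1 + (b ⬝ᵥ w) • vecMulVec (P *ᵥ c) (b ᵥ* P') := by
    rw [Matrix.mul_add, Matrix.mul_one, Matrix.add_mul, h1, Matrix.mul_smul,
      Matrix.smul_mul, mul_vecMulVec_mul]
  simp only [QofP, mkM, Matrix.reindex_apply, Matrix.submatrix_mul_equiv,
    Matrix.fromBlocks_multiply]
  rw [hdot]
  simp only [Matrix.mul_zero, Matrix.zero_mul, Matrix.mul_one, Matrix.one_mul,
    add_zero, zero_add]
  rw [hTL, mul_colM]

lemma mkM_std (w : Fin 3 → ZMod p) :
    mkM (Pi.single 0 1) (Pi.single 2 1) w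
      = !![1,0,0,w 0; 0,1,0,w 1; w 0,0,1,w 2; 0,0,0,1] := by
  rw [← Matrix.ext_iff]
  simp only [Fin.forall_fin_succ]
  refine ⟨⟨?_,?_,?_,?_,(fun i => i.elim0)⟩,⟨?_,?_,?_,?_,(fun i => i.elim0)⟩,
    ⟨?_,?_,?_,?_,(fun i => i.elim0)⟩,⟨?_,?_,?_,?_,(fun i => i.elim0)⟩,
    (fun i => i.elim0)⟩ <;>
    simp (config := { decide := true }) [mkM, colM, Matrix.reindex_apply,
      finSumFinEquiv, Fin.addCases, vecMulVec_apply, Pi.single_apply,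
      dotProduct, Fin.sum_univ_three, Matrix.one_apply, Fin.succ] <;>
    first
      | rfl
      | exact congrArg w (by decide)
      | simp [Matrix.vecHead, Matrix.vecTail]

lemma Tset_eq :
    { M : Matrix (Fin 4) (Fin 4) (ZMod p) | ∃ r₁ r₂ r₃ : ZMod p,
        M = !![1, 0, 0, r₁; 0, 1, 0, r₂; r₁, 0, 1, r₃; 0, 0, 0, 1] }
      = Sset (Pi.single 0 1) (Pi.single 2 1) := by
  ext M
  constructor
  · rintro ⟨r₁, r₂, r₃, rfl⟩
    exact ⟨![r₁, r₂, r₃], by simp [mkM_std]⟩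
  · rintro ⟨w, rfl⟩
    exact ⟨w 0, w 1, w 2, by simp [mkM_std]⟩

lemma mkM_inj {b c w b' c' w' : Fin 3 → ZMod p} (h : mkM b c w = mkM b' c' w') :
    w = w' ∧ (b ⬝ᵥ w) • vecMulVec c b = (b' ⬝ᵥ w') • vecMulVec c' b' := by
  have h2 := (Matrix.reindex (α := ZMod p) finSumFinEquiv finSumFinEquiv).injective h
  rw [Matrix.fromBlocks_inj] at h2
  exact ⟨funext fun i => congrFun (congrFun h2.2.1 i) 0, add_left_cancel h2.1⟩

def bOf (P : GL (Fin 3) (ZMod p)) : Fin 3 → ZMod p := fun j => (P⁻¹).val 0 j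
def cOf (P : GL (Fin 3) (ZMod p)) : Fin 3 → ZMod p := fun i => P.val i 2

lemma hPinv1 (P : GL (Fin 3) (ZMod p)) :
    P.val * (P⁻¹).val = 1 := P.mul_inv

lemma hPinv2 (P : GL (Fin 3) (ZMod p)) :
    (P⁻¹).val * P.val = 1 := P.inv_mul

lemma QofP_inv (P : GL (Fin 3) (ZMod p)) :
    (QofP p 3 P.val)⁻¹ = QofP p 3 (P⁻¹).val :=
  Matrix.inv_eq_right_inv (by rw [QofP_mul, hPinv1, QofP_one])

lemma single_zero_vecMul (A : Matrix (Fin 3) (Fin 3) (ZMod p)) :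
    Pi.single (0 : Fin 3) (1 : ZMod p) ᵥ* A = fun j => A 0 j := by
  funext j
  simp [Matrix.vecMul, dotProduct, Pi.single_apply]

lemma mulVec_single_two (A : Matrix (Fin 3) (Fin 3) (ZMod p)) :
    A *ᵥ Pi.single (2 : Fin 3) (1 : ZMod p) = fun i => A i 2 := by
  funext i
  simp [Matrix.mulVec, dotProduct, Pi.single_apply]

lemma image_eq (P : GL (Fin 3) (ZMod p)) :
    ((fun M => QofP p 3 P.val * M * (QofP p 3 P.val)⁻¹) ''
      { M | ∃ r₁ r₂ r₃ : ZMod p,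
          M = !![1, 0, 0, r₁; 0, 1, 0, r₂; r₁, 0, 1, r₃; 0, 0, 0, 1] })
      = Sset (bOf P) (cOf P) := by
  rw [Tset_eq, QofP_inv]
  have hb : Pi.single (0 : Fin 3) (1 : ZMod p) ᵥ* (P⁻¹).val = bOf P := by
    rw [single_zero_vecMul]; rfl
  have hc : P.val *ᵥ Pi.single (2 : Fin 3) 1 = cOf P := by
    rw [mulVec_single_two]; rfl
  ext N
  constructor
  · rintro ⟨M, ⟨w, rfl⟩, rfl⟩
    refine ⟨P.val *ᵥ w, ?_⟩
    show QofP p 3 P.val * mkM _ _ _ * QofP p 3 (P⁻¹).val = _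
    rw [conj_mkM _ _ (hPinv1 P) (hPinv2 P), hb, hc]
  · rintro ⟨w, rfl⟩
    refine ⟨mkM (Pi.single 0 1) (Pi.single 2 1) ((P⁻¹).val *ᵥ w),
      ⟨_, rfl⟩, ?_⟩
    show QofP p 3 P.val * mkM _ _ _ * QofP p 3 (P⁻¹).val = _
    rw [conj_mkM _ _ (hPinv1 P) (hPinv2 P), hb, hc, Matrix.mulVec_mulVec, hPinv1,
      Matrix.one_mulVec]

lemma mkM_scale [Fact p.Prime] {l : ZMod p} (hl : l ≠ 0) (b c w : Fin 3 → ZMod p) :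
    mkM (l • b) ((l⁻¹ * l⁻¹) • c) w = mkM b c w := by
  have hTL : ((l • b) ⬝ᵥ w) • vecMulVec ((l⁻¹ * l⁻¹) • c) (l • b)
      = (b ⬝ᵥ w) • vecMulVec c b := by
    ext i j
    simp only [Matrix.smul_apply, vecMulVec_apply, smul_dotProduct,
      Pi.smul_apply, smul_eq_mul]
    field_simp
  rw [mkM, mkM, hTL]

lemma Sset_scale [Fact p.Prime] {l : ZMod p} (hl : l ≠ 0) (b c : Fin 3 → ZMod p) :
    Sset (l • b) ((l⁻¹ * l⁻¹) • c) = Sset b c := by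
  unfold Sset
  ext N
  exact ⟨fun ⟨w, hw⟩ => ⟨w, by rwa [mkM_scale hl] at hw⟩,
    fun ⟨w, hw⟩ => ⟨w, by rwa [mkM_scale hl]⟩⟩

lemma Sset_rel [Fact p.Prime] {b c b' c' : Fin 3 → ZMod p} (hb : b ≠ 0) (hc : c ≠ 0)
    (h : Sset b c ⊆ Sset b' c') :
    ∃ l : ZMod p, l ≠ 0 ∧ b' = l • b ∧ c' = (l⁻¹ * l⁻¹) • c := by
  have hE : ∀ (w : Fin 3 → ZMod p) i j,
      (b ⬝ᵥ w) * (c i * b j) = (b' ⬝ᵥ w) * (c' i * b' j) := by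
    intro w i j
    obtain ⟨w', hw'⟩ := h ⟨w, rfl⟩
    obtain ⟨rfl, hM⟩ := mkM_inj hw'.symm
    have := congrFun (congrFun hM i) j
    simpa [vecMulVec_apply] using this.symm
  obtain ⟨j0, hbj0⟩ : ∃ j, b j ≠ 0 := by
    by_contra hcon; push_neg at hcon; exact hb (funext fun j => hcon j)
  obtain ⟨i0, hci0⟩ : ∃ i, c i ≠ 0 := by
    by_contra hcon; push_neg at hcon; exact hc (funext fun i => hcon i)
  have hw : ∀ i j, b j0 * (c i * b j) = b' j0 * (c' i * b' j) := by
    intro i j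
    have := hE (Pi.single j0 1) i j
    simpa [dotProduct_single] using this
  have h00 : b' j0 * (c' i0 * b' j0) ≠ 0 := by
    rw [← hw i0 j0]
    exact mul_ne_zero hbj0 (mul_ne_zero hci0 hbj0)
  have hbj0' : b' j0 ≠ 0 := fun h0 => h00 (by rw [h0, zero_mul])
  have hci0' : c' i0 ≠ 0 := fun h0 => h00 (by rw [h0, zero_mul, mul_zero])
  refine ⟨b' j0 * (b j0)⁻¹, mul_ne_zero hbj0' (inv_ne_zero hbj0), ?_, ?_⟩
  · funext j
    have h1 := hw i0 j
    have h2 := hw i0 j0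
    show b' j = b' j0 * (b j0)⁻¹ * b j
    apply mul_right_cancel₀ (mul_ne_zero hci0 hbj0)
    have hcan : b j0 * (b j0)⁻¹ = 1 := mul_inv_cancel₀ hbj0
    linear_combination (b j0)⁻¹ * (b' j * h2 - b' j0 * h1) - (b' j * c i0 * b j0) * hcan
  · funext i
    have h1 := hw i j0
    have hinv : (b' j0 * (b j0)⁻¹)⁻¹ = b j0 * (b' j0)⁻¹ := by
      rw [mul_inv, inv_inv, mul_comm]
    show c' i = (b' j0 * (b j0)⁻¹)⁻¹ * (b' j0 * (b j0)⁻¹)⁻¹ * c i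
    rw [hinv]
    apply mul_left_cancel₀ (mul_ne_zero hbj0' hbj0')
    have hcan : b' j0 * (b' j0)⁻¹ = 1 := mul_inv_cancel₀ hbj0'
    linear_combination (-1 : ZMod p) * h1 +
      (-(b j0 * (c i * b j0)) * (1 + b' j0 * (b' j0)⁻¹)) * hcan

lemma exists_P [Fact p.Prime] {b c : Fin 3 → ZMod p} (hb : b ≠ 0) (hc : c ≠ 0)
    (hbc : b ⬝ᵥ c = 0) :
    ∃ P : GL (Fin 3) (ZMod p), bOf P = b ∧ cOf P = c := by
  obtain ⟨j0, hbj0⟩ : ∃ j, b j ≠ 0 := by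
    by_contra hcon; push_neg at hcon; exact hb (funext fun j => hcon j)
  set u : Fin 3 → ZMod p := (b j0)⁻¹ • (Pi.single j0 1 : Fin 3 → ZMod p) with hu
  have hbu : b ⬝ᵥ u = 1 := by
    rw [hu, dotProduct_smul, dotProduct_single, smul_eq_mul]
    field_simp
  set vm : Fin 3 → Fin 3 → ZMod p :=
    fun m => (Pi.single m 1 : Fin 3 → ZMod p)
      - (b m * (b j0)⁻¹) • (Pi.single j0 1 : Fin 3 → ZMod p) with hvm
  have hbvm : ∀ m, b ⬝ᵥ vm m = 0 := by
    intro m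
    rw [hvm]
    rw [dotProduct_sub, dotProduct_smul, dotProduct_single, dotProduct_single,
      smul_eq_mul]
    field_simp
    ring
  have hfin : ∀ j : Fin 3, j + 1 ≠ j ∧ j + 2 ≠ j ∧ j + 1 ≠ j + 2 := by decide
  set m1 := j0 + 1 with hm1def
  set m2 := j0 + 2 with hm2def
  have hm1j : m1 ≠ j0 := (hfin j0).1
  have hm2j : m2 ≠ j0 := (hfin j0).2.1
  have hm12 : m1 ≠ m2 := (hfin j0).2.2
  have hvm_self : ∀ m, m ≠ j0 → vm m m = 1 := by
    intro m hm
    rw [hvm]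
    simp [Pi.single_apply, hm]
  have hvm_other : ∀ m m', m ≠ j0 → m' ≠ m → m' ≠ j0 → vm m m' = 0 := by
    intro m m' hm hm' hm'j
    rw [hvm]
    simp [Pi.single_apply, Ne.symm hm', hm'j]
  have hv : ∃ v : Fin 3 → ZMod p, b ⬝ᵥ v = 0 ∧
      (∀ β γ : ZMod p, β • v + γ • c = 0 → β = 0 ∧ γ = 0) := by
    by_cases hcase : ∀ β γ : ZMod p, β • vm m1 + γ • c = 0 → β = 0 ∧ γ = 0
    · exact ⟨vm m1, hbvm m1, hcase⟩
    · push_neg at hcase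
      obtain ⟨β, γ, heq, hne⟩ := hcase
      have hγ : γ ≠ 0 := by
        intro h0
        rw [h0, zero_smul, add_zero] at heq
        have hβ : β ≠ 0 := by tauto
        have h1 : vm m1 m1 = 0 := by
          have := congrFun heq m1
          simp only [Pi.smul_apply, smul_eq_mul, Pi.zero_apply] at this
          exact (mul_eq_zero.mp this).resolve_left hβ
        rw [hvm_self m1 hm1j] at h1
        exact one_ne_zero h1
      have hcδ : c = (-(β * γ⁻¹)) • vm m1 := by
        funext i
        have := congrFun heq i
        simp only [Pi.add_apply, Pi.smul_apply, smul_eq_mul, Pi.zero_apply] at this ⊢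
        have hγc : γ * γ⁻¹ = 1 := mul_inv_cancel₀ hγ
        linear_combination γ⁻¹ * this - c i * hγc
      have hδ : -(β * γ⁻¹) ≠ 0 := by
        intro h0
        rw [h0, zero_smul] at hcδ
        exact hc hcδ
      refine ⟨vm m2, hbvm m2, fun β' γ' heq' => ?_⟩
      have hβ' : β' = 0 := by
        have h2 := congrFun heq' m2
        simp only [Pi.add_apply, Pi.smul_apply, smul_eq_mul, Pi.zero_apply] at h2
        rw [hvm_self m2 hm2j, hcδ] at h2
        simp only [Pi.smul_apply, smul_eq_mul] at h2
        rw [hvm_other m1 m2 hm1j (Ne.symm hm12) hm2j] at h2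
        simpa using h2
      refine ⟨hβ', ?_⟩
      rw [hβ', zero_smul, zero_add] at heq'
      have h3 := congrFun heq' m1
      simp only [Pi.smul_apply, smul_eq_mul, Pi.zero_apply] at h3
      rw [hcδ] at h3
      simp only [Pi.smul_apply, smul_eq_mul] at h3
      rw [hvm_self m1 hm1j] at h3
      have h4 : γ' * -(β * γ⁻¹) = 0 := by simpa using h3
      rcases mul_eq_zero.mp h4 with h | h
      · exact h
      · exact absurd h hδ
  obtain ⟨v, hbv, hvc⟩ := hv
  set Pm : Matrix (Fin 3) (Fin 3) (ZMod p) :=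
    Matrix.of (fun i j => if j = 0 then u i else if j = 1 then v i else c i) with hPm
  have hmv : ∀ g : Fin 3 → ZMod p, Pm *ᵥ g = 0 → g = 0 := by
    intro g hg
    have hcomb : g 0 • u + g 1 • v + g 2 • c = 0 := by
      funext i
      have := congrFun hg i
      simp (config := { decide := true }) only [Matrix.mulVec, dotProduct,
        Fin.sum_univ_three, hPm, Matrix.of_apply, Pi.zero_apply, if_true, if_false] at this
      simp only [Pi.add_apply, Pi.smul_apply, smul_eq_mul, Pi.zero_apply]
      linear_combination this
    have hg0 : g 0 = 0 := by
      have hdot := congrArg (fun x => b ⬝ᵥ x) hcomb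
      simpa [dotProduct_add, dotProduct_smul, hbu, hbv, hbc] using hdot
    rw [hg0, zero_smul, zero_add] at hcomb
    obtain ⟨h1, h2⟩ := hvc _ _ hcomb
    funext i
    fin_cases i <;> simp [hg0, h1, h2]
  have hinj : Function.Injective Pm.mulVec := by
    intro x y hxy
    have h5 : Pm *ᵥ (x - y) = 0 := by
      rw [Matrix.mulVec_sub, hxy, sub_self]
    exact sub_eq_zero.mp (hmv _ h5)
  have hPmU : IsUnit Pm := Matrix.mulVec_injective_iff_isUnit.mp hinj
  have hval : (hPmU.unit).val = Pm := hPmU.unit_spec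
  refine ⟨hPmU.unit, ?_, ?_⟩
  · have hrow : b ᵥ* Pm = Pi.single 0 1 := by
      funext j
      have hbu' : b 0 * u 0 + b 1 * u 1 + b 2 * u 2 = 1 := by
        simpa [dotProduct, Fin.sum_univ_three] using hbu
      have hbv' : b 0 * v 0 + b 1 * v 1 + b 2 * v 2 = 0 := by
        simpa [dotProduct, Fin.sum_univ_three] using hbv
      have hbc' : b 0 * c 0 + b 1 * c 1 + b 2 * c 2 = 0 := by
        simpa [dotProduct, Fin.sum_univ_three] using hbc
      fin_cases j <;>
        simp [Matrix.vecMul, dotProduct, Fin.sum_univ_three, hPm,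
          Pi.single_apply] <;>
        first
          | linear_combination hbu'
          | linear_combination hbv'
          | linear_combination hbc'
    funext j
    show (hPmU.unit⁻¹).val 0 j = b j
    have hPinv : (hPmU.unit⁻¹).val = Pm⁻¹ := by
      rw [Matrix.coe_units_inv, hval]
    rw [hPinv]
    have hright : Pm * Pm⁻¹ = 1 :=
      Matrix.mul_nonsing_inv Pm ((Matrix.isUnit_iff_isUnit_det Pm).mp hPmU)
    have harr : b ᵥ* (Pm * Pm⁻¹) = (Pi.single 0 1 : Fin 3 → ZMod p) ᵥ* Pm⁻¹ := by
      rw [← Matrix.vecMul_vecMul, hrow]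
    rw [hright, Matrix.vecMul_one] at harr
    rw [single_zero_vecMul] at harr
    exact (congrFun harr j).symm
  · funext i
    show (hPmU.unit).val i 2 = c i
    rw [hval]
    simp [hPm]

lemma card_ker [Fact p.Prime] {b : Fin 3 → ZMod p} (hb : b ≠ 0) :
    Nat.card {c : Fin 3 → ZMod p // b ⬝ᵥ c = 0} = p ^ 2 := by
  obtain ⟨j0, hbj0⟩ : ∃ j, b j ≠ 0 := by
    by_contra hcon; push_neg at hcon; exact hb (funext fun j => hcon j)
  have eqK : (Fin 3 → ZMod p) ≃ {c : Fin 3 → ZMod p // b ⬝ᵥ c = 0} × ZMod p :=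
    { toFun := fun c =>
        (⟨c - ((b ⬝ᵥ c) * (b j0)⁻¹) • (Pi.single j0 1 : Fin 3 → ZMod p), by
          rw [dotProduct_sub, dotProduct_smul, dotProduct_single, smul_eq_mul]
          field_simp
          ring⟩, b ⬝ᵥ c)
      invFun := fun k => k.1.1 + (k.2 * (b j0)⁻¹) • (Pi.single j0 1 : Fin 3 → ZMod p)
      left_inv := fun c => by simp
      right_inv := fun k => by
        have hk := k.1.2
        have hdot : b ⬝ᵥ (k.1.1 + (k.2 * (b j0)⁻¹) • (Pi.single j0 1 : Fin 3 → ZMod p))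
            = k.2 := by
          rw [dotProduct_add, dotProduct_smul, dotProduct_single, hk, smul_eq_mul]
          field_simp
          ring
        ext
        · simp [hdot]
        · simp [hdot] }
  have h1 : Nat.card (Fin 3 → ZMod p)
      = Nat.card {c : Fin 3 → ZMod p // b ⬝ᵥ c = 0} * Nat.card (ZMod p) := by
    rw [Nat.card_congr eqK, Nat.card_prod]
  have hp0 : p ≠ 0 := (Fact.out : p.Prime).ne_zero
  haveI : NeZero p := ⟨hp0⟩
  have h2 : Nat.card (Fin 3 → ZMod p) = p ^ 3 := by
    simp [Nat.card_eq_fintype_card, ZMod.card]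
  have h3 : Nat.card (ZMod p) = p := by
    simp [Nat.card_eq_fintype_card, ZMod.card]
  rw [h2, h3] at h1
  apply Nat.eq_of_mul_eq_mul_right (Nat.pos_of_ne_zero hp0)
  rw [← h1]; ring

lemma card_fiber [Fact p.Prime] {b : Fin 3 → ZMod p} (hb : b ≠ 0) :
    Nat.card {c : Fin 3 → ZMod p // c ≠ 0 ∧ b ⬝ᵥ c = 0} = p ^ 2 - 1 := by
  have e1 : {c : Fin 3 → ZMod p // c ≠ 0 ∧ b ⬝ᵥ c = 0}
      ≃ {x : {c : Fin 3 → ZMod p // b ⬝ᵥ c = 0} // x ≠ ⟨0, by simp⟩} :=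
    { toFun := fun c => ⟨⟨c.1, c.2.2⟩, by
        intro h0
        exact c.2.1 (congrArg Subtype.val h0)⟩
      invFun := fun x => ⟨x.1.1, fun h0 => x.2 (Subtype.ext h0), x.1.2⟩
      left_inv := fun c => rfl
      right_inv := fun x => rfl }
  rw [Nat.card_congr e1]
  classical
  rw [Nat.card_eq_fintype_card, Fintype.card_subtype_compl, ← card_ker hb,
    Nat.card_eq_fintype_card]
  congr 1

abbrev Esub (p : ℕ) := {x : (Fin 3 → ZMod p) × (Fin 3 → ZMod p) //
    x.1 ≠ 0 ∧ x.2 ≠ 0 ∧ x.1 ⬝ᵥ x.2 = 0}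

def hfun (p : ℕ) : Esub p → Set (Matrix (Fin 4) (Fin 4) (ZMod p)) :=
  fun e => Sset e.1.1 e.1.2

lemma card_E [Fact p.Prime] :
    Nat.card (Esub p) = (p ^ 3 - 1) * (p ^ 2 - 1) := by
  have hp0 : p ≠ 0 := (Fact.out : p.Prime).ne_zero
  haveI : NeZero p := ⟨hp0⟩
  have e1 : Esub p
      ≃ Σ b : {b : Fin 3 → ZMod p // b ≠ 0},
          {c : Fin 3 → ZMod p // c ≠ 0 ∧ b.1 ⬝ᵥ c = 0} :=
    { toFun := fun x => ⟨⟨x.1.1, x.2.1⟩, ⟨x.1.2, x.2.2.1, x.2.2.2⟩⟩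
      invFun := fun y => ⟨(y.1.1, y.2.1), y.1.2, y.2.2.1, y.2.2.2⟩
      left_inv := fun x => rfl
      right_inv := fun y => rfl }
  have e2 : ∀ b : {b : Fin 3 → ZMod p // b ≠ 0},
      {c : Fin 3 → ZMod p // c ≠ 0 ∧ b.1 ⬝ᵥ c = 0} ≃ Fin (p ^ 2 - 1) := by
    intro b
    have hcard := card_fiber b.2
    classical
    rw [Nat.card_eq_fintype_card] at hcard
    exact Fintype.equivFinOfCardEq hcard
  have e3 := e1.trans ((Equiv.sigmaCongrRight e2).trans
    (Equiv.sigmaEquivProd {b : Fin 3 → ZMod p // b ≠ 0} (Fin (p ^ 2 - 1))))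
  rw [Nat.card_congr e3, Nat.card_prod]
  congr 1
  · classical
    rw [Nat.card_eq_fintype_card, Fintype.card_subtype_compl]
    simp [ZMod.card, Fintype.card_subtype_eq]
  · simp

def act [Fact p.Prime] (e0 : Esub p) (u : (ZMod p)ˣ) : Esub p :=
  ⟨(u.val • e0.1.1, ((u.val)⁻¹ * (u.val)⁻¹) • e0.1.2),
    smul_ne_zero u.ne_zero e0.2.1,
    smul_ne_zero (mul_ne_zero (inv_ne_zero u.ne_zero) (inv_ne_zero u.ne_zero)) e0.2.2.1,
    by rw [smul_dotProduct, dotProduct_smul, e0.2.2.2, smul_zero, smul_zero]⟩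

lemma hfun_act [Fact p.Prime] (e0 : Esub p) (u : (ZMod p)ˣ) :
    hfun p (act e0 u) = hfun p e0 :=
  Sset_scale u.ne_zero e0.1.1 e0.1.2

lemma card_E_eq_range [Fact p.Prime] :
    Nat.card (Esub p) = Nat.card (Set.range (hfun p)) * (p - 1) := by
  have fib : ∀ y : Set.range (hfun p), {e : Esub p // hfun p e = y.1} ≃ (ZMod p)ˣ := by
    intro y
    have hy2 := y.2
    set e0 := hy2.choose with he0def
    have he0 : hfun p e0 = y.1 := hy2.choose_spec
    refine (Equiv.ofBijective
      (fun u => (⟨act e0 u, (hfun_act e0 u).trans he0⟩ : {e : Esub p // hfun p e = y.1}))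
      ⟨?_, ?_⟩).symm
    · intro u u' huu
      obtain ⟨jb, hjb⟩ : ∃ j, e0.1.1 j ≠ 0 := by
        by_contra hcon; push_neg at hcon; exact e0.2.1 (funext fun j => hcon j)
      have h1 : u.val • e0.1.1 = u'.val • e0.1.1 :=
        congrArg (fun z => z.1.1.1) huu
      have h2 := congrFun h1 jb
      simp only [Pi.smul_apply, smul_eq_mul] at h2
      exact Units.ext (mul_right_cancel₀ hjb h2)
    · rintro ⟨e', he'⟩
      have hsub : Sset e0.1.1 e0.1.2 ⊆ Sset e'.1.1 e'.1.2 :=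
        le_of_eq ((he0.trans he'.symm) : hfun p e0 = hfun p e')
      obtain ⟨l, hl, hb', hc'⟩ := Sset_rel e0.2.1 e0.2.2.1 hsub
      refine ⟨Units.mk0 l hl, ?_⟩
      apply Subtype.ext
      apply Subtype.ext
      apply Prod.ext
      · show (Units.mk0 l hl).val • e0.1.1 = e'.1.1
        rw [hb']; rfl
      · show ((Units.mk0 l hl).val⁻¹ * (Units.mk0 l hl).val⁻¹) • e0.1.2 = e'.1.2
        rw [hc']; rfl
  have e4 : Esub p ≃ Set.range (hfun p) × (ZMod p)ˣ := by
    refine ((Equiv.sigmaFiberEquiv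
      (fun e : Esub p => (⟨hfun p e, Set.mem_range_self e⟩ : Set.range (hfun p)))).symm.trans
      ?_)
    refine (Equiv.sigmaCongrRight (fun y => ?_)).trans
      (Equiv.sigmaEquivProd (Set.range (hfun p)) (ZMod p)ˣ)
    refine (Equiv.subtypeEquivRight (fun e => ?_)).trans (fib y)
    constructor
    · intro h; exact congrArg Subtype.val h
    · intro h; exact Subtype.ext h
  rw [Nat.card_congr e4, Nat.card_prod]
  congr 1
  rw [Nat.card_eq_fintype_card, ZMod.card_units]

lemma bOf_props [Fact p.Prime] (P : GL (Fin 3) (ZMod p)) :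
    bOf P ≠ 0 ∧ cOf P ≠ 0 ∧ bOf P ⬝ᵥ cOf P = 0 := by
  have hinv := hPinv2 P
  refine ⟨?_, ?_, ?_⟩
  · intro h0
    have h00 := congrFun (congrFun hinv 0) 0
    rw [Matrix.mul_apply, Matrix.one_apply_eq] at h00
    have hz : ∀ k, (P⁻¹).val 0 k = 0 := fun k => congrFun h0 k
    simp only [hz, zero_mul, Finset.sum_const_zero] at h00
    exact zero_ne_one h00
  · intro h0
    have h22 := congrFun (congrFun hinv 2) 2
    rw [Matrix.mul_apply, Matrix.one_apply_eq] at h22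
    have hz : ∀ k, P.val k 2 = 0 := fun k => congrFun h0 k
    simp only [hz, mul_zero, Finset.sum_const_zero] at h22
    exact zero_ne_one h22
  · have h02 := congrFun (congrFun hinv 0) 2
    rw [Matrix.mul_apply] at h02
    have : bOf P ⬝ᵥ cOf P = ∑ k, (P⁻¹).val 0 k * P.val k 2 := rfl
    rw [this, h02]
    simp [Matrix.one_apply]

lemma range_eq [Fact p.Prime] :
    (Set.range fun P : GL (Fin 3) (ZMod p) =>
        (fun M => QofP p 3 (P : Matrix (Fin 3) (Fin 3) (ZMod p)) * M *
            (QofP p 3 (P : Matrix (Fin 3) (Fin 3) (ZMod p)))⁻¹) ''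
          { M | ∃ r₁ r₂ r₃ : ZMod p,
              M = !![1, 0, 0, r₁; 0, 1, 0, r₂; r₁, 0, 1, r₃; 0, 0, 0, 1] })
      = Set.range (hfun p) := by
  ext S
  constructor
  · rintro ⟨P, rfl⟩
    obtain ⟨h1, h2, h3⟩ := bOf_props P
    exact ⟨⟨(bOf P, cOf P), h1, h2, h3⟩, (image_eq P).symm⟩
  · rintro ⟨⟨⟨b, c⟩, hb, hc, hbc⟩, rfl⟩
    obtain ⟨P, hP1, hP2⟩ := exists_P hb hc hbc
    exact ⟨P, by dsimp only; rw [image_eq P, hP1, hP2]; rfl⟩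

/-- For `T = { [[1,0,0,r₁],[0,1,0,r₂],[r₁,0,1,r₃],[0,0,0,1]] }`,
the number of distinct sets `Q_P·T·Q_P⁻¹` for `P ∈ GL_3(Fp)` is `(p³-1)(p+1)`. -/
theorem stmt_12 (p : ℕ) (hp : p.Prime) (hodd : Odd p) :
    Nat.card (Set.range fun P : GL (Fin 3) (ZMod p) =>
        (fun M => QofP p 3 (P : Matrix (Fin 3) (Fin 3) (ZMod p)) * M *
            (QofP p 3 (P : Matrix (Fin 3) (Fin 3) (ZMod p)))⁻¹) ''
          { M | ∃ r₁ r₂ r₃ : ZMod p,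
              M = !![1, 0, 0, r₁; 0, 1, 0, r₂; r₁, 0, 1, r₃; 0, 0, 0, 1] }) =
      (p ^ 3 - 1) * (p + 1) := by
  haveI : Fact p.Prime := ⟨hp⟩
  rw [range_eq]
  have hA := card_E_eq_range (p := p)
  have hB := card_E (p := p)
  have hp2 : 2 ≤ p := hp.two_le
  apply Nat.eq_of_mul_eq_mul_right (show 0 < p - 1 by omega)
  rw [hA.symm.trans hB]
  obtain ⟨k, rfl⟩ : ∃ k, p = k + 1 := ⟨p - 1, by omega⟩
  simp only [Nat.add_sub_cancel]
  have h1 : (k + 1) ^ 2 - 1 = k * (k + 2) := by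
    have e : (k + 1) ^ 2 = k * (k + 2) + 1 := by ring
    rw [e, Nat.add_sub_cancel]
  rw [h1]
  generalize (k + 1) ^ 3 - 1 = A
  ring
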